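/- There exists a continuous injection I : 2^ω → B_1(2^ω, 2) (where B_1(2^ω,2) carries the pointwise convergence topology) such that the image A = I[2^ω] is not uniformly recoverable, and in fact the evaluation map φ : 2^ω × A → 2, φ(x,f) = f(x), is not Baire class one. -/

import Mathlib

open Filter Topology Set Classical

noncomputable section
open scoped Classical

/-- A set is Fσ if it is a countable union of closed sets. -/
def IsFsigma {X : Type*} [TopologicalSpace X] (s : Set X) : Prop :=
  ∃ F : ℕ → Set X, (∀ n, IsClosed (F n)) ∧ s = ⋃ n, F n

/-- A function is Baire class one if the preimage of every open set is Fσ. -/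
def BaireClassOneFn {X Y : Type*} [TopologicalSpace X] [TopologicalSpace Y] (f : X → Y) : Prop :=
  ∀ U : Set Y, IsOpen U → IsFsigma (f ⁻¹' U)

/-- A countable basis `(W m)` is good if for every open `U` and `x ∈ U` there is `m₀`
such that for all `m ≥ m₀`, `x ∈ W m` implies `W m ⊆ U`. -/
def IsGoodBasis {X : Type*} [TopologicalSpace X] (W : ℕ → Set X) : Prop :=
  TopologicalSpace.IsTopologicalBasis (Set.range W) ∧
  ∀ U : Set X, IsOpen U → ∀ x ∈ U, ∃ m₀, ∀ m ≥ m₀, x ∈ W m → W m ⊆ U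

/-- The path to `x` based on the dense sequence `D`, relative to the good basis `W`. -/
noncomputable def pathSeq {X : Type*} (W : ℕ → Set X) (D : ℕ → X) (x : X) : ℕ → X
  | 0 => D 0
  | n + 1 =>
    if x = pathSeq W D x n then pathSeq W D x n
    else D (sInf {p | ∃ m, x ∈ W m ∧ D p ∈ W m ∧ ∀ k, k ≤ n → pathSeq W D x k ∉ W m})
  termination_by n => n
  decreasing_by all_goals omega

/-- `f` is recoverable with respect to `D` (and the good basis `W`). -/
def RecoverableWith {X Y : Type*} [TopologicalSpace Y] (W : ℕ → Set X) (D : ℕ → X)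
    (f : X → Y) : Prop :=
  ∀ x : X, Tendsto (fun n => f (pathSeq W D x n)) atTop (𝓝 (f x))

namespace NUR

abbrev CC := ℕ → Bool

/-- `pad α j` : the first `j` bits of `α` followed by `false`s. -/
def pad (α : CC) (j : ℕ) : CC := fun i => if i < j then α i else false

/-- the injection -/
def Ifun (α : CC) : CC → Bool := fun u => decide (∃ j, u = pad α j)

lemma Ifun_eq_true_iff {α u : CC} : Ifun α u = true ↔ ∃ j, u = pad α j := by
  simp [Ifun]

lemma Ifun_eq_false_iff {α u : CC} : Ifun α u = false ↔ ∀ j, u ≠ pad α j := by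
  simp [Ifun]

/-- eventually false -/
def Fin0 (u : CC) : Prop := ∃ N, ∀ i, N ≤ i → u i = false

lemma pad_fin0 (α : CC) (j : ℕ) : Fin0 (pad α j) :=
  ⟨j, fun i hi => by simp [pad, Nat.not_lt.mpr hi]⟩

lemma pad_eq_self {u : CC} {N : ℕ} (h : ∀ i, N ≤ i → u i = false) : pad u N = u := by
  funext i
  by_cases hi : i < N
  · simp [pad, hi]
  · simp [pad, hi, h i (Nat.le_of_not_lt hi)]

lemma Ifun_diag_true {u : CC} (h : Fin0 u) : Ifun u u = true := by
  obtain ⟨N, hN⟩ := h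
  exact Ifun_eq_true_iff.mpr ⟨N, (pad_eq_self hN).symm⟩

lemma Ifun_of_not_fin0 {α u : CC} (h : ¬ Fin0 u) : Ifun α u = false := by
  rw [Ifun_eq_false_iff]
  intro j hj
  exact h (hj ▸ pad_fin0 α j)

/-- cylinder around x of depth n -/
def cyl (x : CC) (n : ℕ) : Set CC := {y | ∀ i, i < n → y i = x i}

lemma mem_cyl_self (x : CC) (n : ℕ) : x ∈ cyl x n := fun _ _ => rfl

lemma isOpen_cyl (x : CC) (n : ℕ) : IsOpen (cyl x n) := by
  have : cyl x n = ⋂ i ∈ Finset.range n, (fun y : CC => y i) ⁻¹' {x i} := by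
    ext y; simp [cyl]
  rw [this]
  exact isOpen_biInter_finset fun i _ => (continuous_apply i).isOpen_preimage _ (isOpen_discrete _)

lemma isClosed_cyl (x : CC) (n : ℕ) : IsClosed (cyl x n) := by
  have : cyl x n = ⋂ i ∈ Finset.range n, (fun y : CC => y i) ⁻¹' {x i} := by
    ext y; simp [cyl]
  rw [this]
  exact isClosed_biInter fun i _ => IsClosed.preimage (continuous_apply i) (isClosed_discrete _)

lemma exists_cyl_subset {U : Set CC} (hU : IsOpen U) {x : CC} (hx : x ∈ U) :
    ∃ n, cyl x n ⊆ U := by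
  rcases isOpen_pi_iff.mp hU x hx with ⟨I, u, hu, hsub⟩
  rcases I.bddAbove with ⟨N, hN⟩
  refine ⟨N + 1, fun y hy => hsub ?_⟩
  intro i hi
  have : y i = x i := hy i (Nat.lt_succ_of_le (hN hi))
  rw [this]
  exact (hu i hi).2


lemma isFsigma_closed {s : Set CC} (h : IsClosed s) : IsFsigma s :=
  ⟨fun _ => s, fun _ => h, (Set.iUnion_const s).symm⟩

lemma isFsigma_union {s t : Set CC} (hs : IsFsigma s) (ht : IsFsigma t) : IsFsigma (s ∪ t) := by
  obtain ⟨F, hF, rfl⟩ := hs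
  obtain ⟨G, hG, rfl⟩ := ht
  exact ⟨fun n => F n ∪ G n, fun n => (hF n).union (hG n),
    by rw [← iUnion_union_distrib]⟩

/-- cylinder determined by a list -/
def cylL (s : List Bool) : Set CC := {y | ∀ i, (h : i < s.length) → y i = s.get ⟨i, h⟩}

lemma isClosed_cylL (s : List Bool) : IsClosed (cylL s) := by
  have : cylL s = ⋂ i ∈ Finset.range s.length,
      (fun y : CC => y i) ⁻¹' {b | ∀ (h : i < s.length), b = s.get ⟨i, h⟩} := by
    ext y; simp [cylL]
  rw [this]
  exact isClosed_biInter fun i _ => IsClosed.preimage (continuous_apply i) (isClosed_discrete _)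

lemma isFsigma_open {U : Set CC} (hU : IsOpen U) : IsFsigma U := by
  classical
  refine ⟨fun k => Option.elim (Encodable.decode (α := List Bool) k) ∅
      (fun s => if cylL s ⊆ U then cylL s else ∅), ?_, ?_⟩
  · intro k
    cases hd : Encodable.decode (α := List Bool) k with
    | none => simpa [hd] using isClosed_empty
    | some s =>
        by_cases h : cylL s ⊆ U <;> simp [hd, h, isClosed_cylL, isClosed_empty]
  · ext x
    constructor
    · intro hx
      obtain ⟨n, hn⟩ := exists_cyl_subset hU hx
      refine mem_iUnion.mpr ⟨Encodable.encode (List.ofFn fun i : Fin n => x i), ?_⟩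
      rw [Encodable.encodek, Option.elim]
      have hcyl : cylL (List.ofFn fun i : Fin n => x i) = cyl x n := by
        ext y
        constructor
        · intro hy i hi
          have := hy i (by simpa using hi)
          simpa using this
        · intro hy i hilt
          have hi : i < n := by simpa using hilt
          simp [List.get_ofFn, hy i hi]
      simp only [hcyl]
      rw [if_pos hn]
      exact mem_cyl_self x n
    · intro hx
      rcases mem_iUnion.mp hx with ⟨k, hk⟩
      revert hk
      cases hd : Encodable.decode (α := List Bool) k with
      | none => simp [hd]
      | some s =>
          by_cases h : cylL s ⊆ U
          · simp only [hd, Option.elim, if_pos h]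
            exact fun hk => h hk
          · simp [hd, Option.elim, if_neg h]


lemma pad_apply_lt {α : CC} {j i : ℕ} (h : i < j) : pad α j i = α i := if_pos h
lemma pad_apply_ge {α : CC} {j i : ℕ} (h : j ≤ i) : pad α j i = false := if_neg (Nat.not_lt.mpr h)

/-- For `u` with finitely many trues, membership `u ∈ S_α` only depends on
`α` below `ℓ := sInf {N | ∀ i ≥ N, u i = false}`. -/
lemma Ifun_eval_fin0 {u : CC} (h : Fin0 u) (α : CC) :
    Ifun α u = decide (∀ i, i < sInf {N | ∀ j, N ≤ j → u j = false} → α i = u i) := by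
  set Z := {N | ∀ j, N ≤ j → u j = false} with hZ
  have hne : Z.Nonempty := h
  have hmem : sInf Z ∈ Z := Nat.sInf_mem hne
  rw [Ifun]
  rw [decide_eq_decide]
  constructor
  · rintro ⟨j, rfl⟩
    have hjZ : j ∈ Z := fun i hi => pad_apply_ge hi
    have hle : sInf Z ≤ j := Nat.sInf_le hjZ
    intro i hi
    exact (pad_apply_lt (lt_of_lt_of_le hi hle)).symm
  · intro hag
    refine ⟨sInf Z, ?_⟩
    funext i
    by_cases hi : i < sInf Z
    · rw [pad_apply_lt hi, hag i hi]
    · rw [pad_apply_ge (Nat.le_of_not_lt hi)]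
      exact hmem i (Nat.le_of_not_lt hi)

lemma continuous_Ifun : Continuous Ifun := by
  apply continuous_pi
  intro u
  by_cases h : Fin0 u
  · set ℓ := sInf {N | ∀ j, N ≤ j → u j = false} with hℓ
    have heq : (fun α => Ifun α u) =
        (fun v : Fin ℓ → Bool => decide (∀ i : Fin ℓ, v i = u i)) ∘
          (fun α : CC => fun i : Fin ℓ => α (i : ℕ)) := by
      funext α
      simp only [Function.comp]
      rw [Ifun_eval_fin0 h α, decide_eq_decide]
      constructor
      · intro hag i; exact hag i i.2
      · intro hag i hi; exact hag ⟨i, hi⟩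
    rw [heq]
    exact (continuous_of_discreteTopology).comp
      (continuous_pi fun i => continuous_apply (i : ℕ))
  · have heq : (fun α => Ifun α u) = fun _ => false := by
      funext α; exact Ifun_of_not_fin0 h
    rw [heq]; exact continuous_const

lemma injective_Ifun : Function.Injective Ifun := by
  have key : ∀ α β : CC, ∀ n, (∀ i, i < n → α i = β i) → α n = true → β n = false →
      Ifun α ≠ Ifun β := by
    intro α β n hag hα hβ hcon
    have h1 : Ifun α (pad α (n + 1)) = true := Ifun_eq_true_iff.mpr ⟨n + 1, rfl⟩
    have h2 : Ifun β (pad α (n + 1)) = false := by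
      rw [Ifun_eq_false_iff]
      intro j hj
      by_cases hjn : j ≤ n
      · have := congrFun hj n
        rw [pad_apply_lt (Nat.lt_succ_self n), pad_apply_ge hjn] at this
        rw [hα] at this; exact Bool.noConfusion this
      · have hn : n < j := Nat.lt_of_not_le hjn
        have := congrFun hj n
        rw [pad_apply_lt (Nat.lt_succ_self n), pad_apply_lt hn] at this
        rw [hα, hβ] at this; exact Bool.noConfusion this
    rw [hcon] at h1
    rw [h1] at h2
    exact Bool.noConfusion h2
  intro α β hαβ
  by_contra hne
  have hex : ∃ n, α n ≠ β n := by
    by_contra hall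
    push_neg at hall
    exact hne (funext hall)
  set n := Nat.find hex with hn
  have hdiff : α n ≠ β n := Nat.find_spec hex
  have hag : ∀ i, i < n → α i = β i := fun i hi => by
    by_contra hne2
    exact Nat.find_min hex hi hne2
  cases hα : α n with
  | true =>
      have hβf : β n = false := by
        cases hβ : β n with
        | true => exact absurd rfl (hα ▸ hβ ▸ hdiff)
        | false => rfl
      exact key α β n hag hα hβf hαβ
  | false =>
      have hβt : β n = true := by
        cases hβ : β n with
        | true => rfl
        | false => exact absurd rfl (hα ▸ hβ ▸ hdiff)
      exact key β α n (fun i hi => (hag i hi).symm) hβt hα hαβ.symm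


/-- support set of Ifun α -/
def Sset (α : CC) : Set CC := {u | Ifun α u = true}

lemma Sset_eq (α : CC) : Sset α = ⋃ j, {pad α j} := by
  ext u
  simp only [Sset, mem_setOf_eq, Ifun_eq_true_iff, mem_iUnion, mem_singleton_iff]

lemma isFsigma_Sset (α : CC) : IsFsigma (Sset α) :=
  ⟨fun j => {pad α j}, fun j => isClosed_singleton, Sset_eq α⟩

/-- the open escape region -/
def Wesc (α : CC) : Set CC := {v | ∃ n, cyl v n ∩ Sset α = ∅}

lemma isOpen_Wesc (α : CC) : IsOpen (Wesc α) := by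
  rw [isOpen_iff_forall_mem_open]
  rintro v ⟨n, hn⟩
  refine ⟨cyl v n, ?_, isOpen_cyl v n, mem_cyl_self v n⟩
  intro y hy
  refine ⟨n, ?_⟩
  have : cyl y n ⊆ cyl v n := by
    intro z hz i hi
    rw [hz i hi, hy i hi]
  rw [← Set.subset_empty_iff, ← hn]
  exact fun z hz => ⟨this hz.1, hz.2⟩

lemma Wesc_disjoint (α : CC) : Wesc α ∩ Sset α = ∅ := by
  ext v
  simp only [mem_inter_iff, mem_empty_iff_false, iff_false, not_and]
  rintro ⟨n, hn⟩ hv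
  have : v ∈ cyl v n ∩ Sset α := ⟨mem_cyl_self v n, hv⟩
  rw [hn] at this
  exact this

/-- separation: a point outside `Sset α` distinct from `α` is in the escape region -/
lemma mem_Wesc_of_notin {α v : CC} (hv : Ifun α v = false) (hne : v ≠ α) : v ∈ Wesc α := by
  have hex : ∃ i, v i ≠ α i := by
    by_contra hall; push_neg at hall; exact hne (funext hall)
  set d := Nat.find hex with hd
  have hded : v d ≠ α d := Nat.find_spec hex
  -- for each j ≤ d, v ≠ pad α j, so there is a difference index
  have hdiffs : ∀ j, v ≠ pad α j := Ifun_eq_false_iff.mp hv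
  have hex2 : ∀ j, ∃ i, v i ≠ pad α j i := by
    intro j
    by_contra hall; push_neg at hall
    exact hdiffs j (funext hall)
  classical
  set Dx : ℕ → ℕ := fun j => Nat.find (hex2 j) with hDx
  set n := max (d + 1) (((Finset.range (d + 1)).sup Dx) + 1) with hn
  refine ⟨n, ?_⟩
  ext y
  simp only [mem_inter_iff, mem_empty_iff_false, iff_false, not_and]
  intro hy hyS
  rcases Ifun_eq_true_iff.mp hyS with ⟨j, rfl⟩
  by_cases hjd : j ≤ d
  · have hDlt : Dx j < n := by
      have : Dx j ≤ (Finset.range (d + 1)).sup Dx :=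
        Finset.le_sup (Finset.mem_range.mpr (Nat.lt_succ_of_le hjd))
      omega
    have h1 := hy (Dx j) hDlt
    exact Nat.find_spec (hex2 j) h1.symm
  · have hdj : d < j := Nat.lt_of_not_le hjd
    have h1 := hy d (lt_of_lt_of_le (Nat.lt_succ_self d) (le_max_left _ _))
    rw [pad_apply_lt hdj] at h1
    exact hded h1.symm

lemma isFsigma_compl_Sset (α : CC) : IsFsigma {u | Ifun α u = false} := by
  by_cases hα : Ifun α α = true
  · have : {u | Ifun α u = false} = Wesc α := by
      ext v
      simp only [mem_setOf_eq]
      constructor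
      · intro hv
        by_cases hne : v = α
        · rw [hne] at hv; rw [hα] at hv; exact Bool.noConfusion hv
        · exact mem_Wesc_of_notin hv hne
      · intro hv
        by_contra hfalse
        have hvt : Ifun α v = true := by
          cases h : Ifun α v with
          | true => rfl
          | false => exact absurd h hfalse
        have := Wesc_disjoint α
        rw [Set.eq_empty_iff_forall_notMem] at this
        exact this v ⟨hv, hvt⟩
    rw [this]
    exact isFsigma_open (isOpen_Wesc α)
  · have hαf : Ifun α α = false := by
      cases h : Ifun α α with
      | true => exact absurd h hα
      | false => rfl
    have : {u | Ifun α u = false} = Wesc α ∪ {α} := by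
      ext v
      simp only [mem_setOf_eq, mem_union, mem_singleton_iff]
      constructor
      · intro hv
        by_cases hne : v = α
        · exact Or.inr hne
        · exact Or.inl (mem_Wesc_of_notin hv hne)
      · rintro (hv | rfl)
        · by_contra hfalse
          have hvt : Ifun α v = true := by
            cases h : Ifun α v with
            | true => rfl
            | false => exact absurd h hfalse
          have := Wesc_disjoint α
          rw [Set.eq_empty_iff_forall_notMem] at this
          exact this v ⟨hv, hvt⟩
        · exact hαf
    rw [this]
    exact isFsigma_union (isFsigma_open (isOpen_Wesc α)) (isFsigma_closed isClosed_singleton)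

lemma baireOne_Ifun (α : CC) : BaireClassOneFn (Ifun α) := by
  intro U hU
  by_cases ht : true ∈ U <;> by_cases hf : false ∈ U
  · have : Ifun α ⁻¹' U = Set.univ := by
      ext u; simp only [mem_preimage, mem_univ, iff_true]
      cases Ifun α u with
      | true => exact ht
      | false => exact hf
    rw [this]; exact isFsigma_closed isClosed_univ
  · have : Ifun α ⁻¹' U = Sset α := by
      ext u
      simp only [mem_preimage, Sset, mem_setOf_eq]
      cases h : Ifun α u with
      | true => simp [ht]
      | false => simp [hf]
    rw [this]; exact isFsigma_Sset α
  · have : Ifun α ⁻¹' U = {u | Ifun α u = false} := by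
      ext u
      simp only [mem_preimage, mem_setOf_eq]
      cases h : Ifun α u with
      | true => simp [ht]
      | false => simp [hf]
    rw [this]; exact isFsigma_compl_Sset α
  · have : Ifun α ⁻¹' U = ∅ := by
      ext u
      simp only [mem_preimage, mem_empty_iff_false, iff_false]
      cases Ifun α u with
      | true => exact ht
      | false => exact hf
    rw [this]; exact isFsigma_closed isClosed_empty


def padL (s : List Bool) : CC := fun i => if h : i < s.length then s.get ⟨i, h⟩ else false

lemma fin0_iff_padL {β : CC} (h : Fin0 β) : ∃ s : List Bool, β = padL s := by
  obtain ⟨N, hN⟩ := h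
  refine ⟨List.ofFn (fun i : Fin N => β i), ?_⟩
  funext i
  by_cases hi : i < N
  · simp [padL, hi]
  · simp only [padL, List.length_ofFn]
    rw [dif_neg hi, hN i (Nat.le_of_not_lt hi)]

lemma not_isOpen_singleton (pt : CC) : ¬ (interior {pt}).Nonempty := by
  rintro ⟨z, hz⟩
  have hzo := isOpen_interior (s := ({pt} : Set CC))
  obtain ⟨n, hn⟩ := exists_cyl_subset hzo hz
  have hzpt : z = pt := by
    have h2 : z ∈ ({pt} : Set CC) := interior_subset hz
    simpa using h2
  subst hzpt
  set y : CC := fun i => if i = n then !(z n) else z i with hy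
  have hymem : y ∈ cyl z n := by
    intro i hi
    simp [hy, Nat.ne_of_lt hi]
  have : y = z := by
    have h3 : y ∈ ({z} : Set CC) := interior_subset (hn hymem)
    simpa using h3
  have := congrFun this n
  simp [hy] at this

theorem eval_not_baireOne :
    ¬ BaireClassOneFn
        (fun p : CC × ↥(Set.range Ifun) => (p.2 : CC → Bool) p.1) := by
  intro hB
  set φ : CC × ↥(Set.range Ifun) → Bool := fun p => (p.2 : CC → Bool) p.1 with hφ
  obtain ⟨F, hFcl, hFeq⟩ := hB {false} (isOpen_discrete _)
  set emb : CC → CC × ↥(Set.range Ifun) :=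
    fun β => (β, ⟨Ifun β, ⟨β, rfl⟩⟩) with hemb
  have hembc : Continuous emb :=
    continuous_id.prodMk (Continuous.subtype_mk continuous_Ifun _)
  -- countable closed cover of CC
  set G : ℕ ⊕ List Bool → Set CC := fun k =>
    match k with
    | Sum.inl k => emb ⁻¹' F k
    | Sum.inr s => {padL s} with hG
  have hGcl : ∀ k, IsClosed (G k) := by
    rintro (k | s)
    · exact (hFcl k).preimage hembc
    · exact isClosed_singleton
  have hGcov : ⋃ k, G k = univ := by
    rw [Set.eq_univ_iff_forall]
    intro β
    by_cases h : Fin0 β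
    · obtain ⟨s, rfl⟩ := fin0_iff_padL h
      exact mem_iUnion.mpr ⟨Sum.inr s, rfl⟩
    · have hf : φ (emb β) = false := Ifun_of_not_fin0 h
      have : emb β ∈ φ ⁻¹' {false} := hf
      rw [hFeq] at this
      rcases mem_iUnion.mp this with ⟨k, hk⟩
      exact mem_iUnion.mpr ⟨Sum.inl k, hk⟩
  obtain ⟨k, hk⟩ := nonempty_interior_of_iUnion_of_closed hGcl hGcov
  rcases k with k | s
  · obtain ⟨β₀, hβ₀⟩ := hk
    obtain ⟨n, hn⟩ := exists_cyl_subset isOpen_interior hβ₀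
    set β := pad β₀ n with hβ
    have hβcyl : β ∈ cyl β₀ n := fun i hi => pad_apply_lt hi
    have hβG : β ∈ emb ⁻¹' F k := interior_subset (hn hβcyl)
    have : emb β ∈ φ ⁻¹' {false} := by
      rw [hFeq]; exact mem_iUnion.mpr ⟨k, hβG⟩
    have hff : Ifun β β = false := this
    have htt : Ifun β β = true := Ifun_diag_true (pad_fin0 β₀ n)
    rw [htt] at hff
    exact Bool.noConfusion hff
  · exact not_isOpen_singleton (padL s) hk


section Path

variable (W : ℕ → Set CC) (D : ℕ → CC) (x : CC)

/-- the set of candidate indices at step `n+1` -/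
def Qset (n : ℕ) : Set ℕ :=
  {p | ∃ m, x ∈ W m ∧ D p ∈ W m ∧ ∀ k, k ≤ n → pathSeq W D x k ∉ W m}

variable {W D x}
variable (hWb : TopologicalSpace.IsTopologicalBasis (Set.range W))
variable (hD : DenseRange D) (hx : x ∉ Set.range D)

include hWb in
lemma isOpen_W (m : ℕ) : IsOpen (W m) := hWb.isOpen ⟨m, rfl⟩

include hx in
lemma path_mem_range : ∀ n, pathSeq W D x n ∈ Set.range D := by
  intro n
  induction n with
  | zero => rw [pathSeq]; exact ⟨0, rfl⟩
  | succ n ih =>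
      rw [pathSeq]
      by_cases h : x = pathSeq W D x n
      · exact absurd (h ▸ ih) hx
      · rw [if_neg h]; exact ⟨_, rfl⟩

include hx in
lemma path_ne (n : ℕ) : x ≠ pathSeq W D x n := fun h => hx (h ▸ path_mem_range hx n)

include hx in
lemma path_succ (n : ℕ) : pathSeq W D x (n + 1) = D (sInf (Qset W D x n)) := by
  rw [pathSeq, if_neg (path_ne hx n)]
  rfl

include hWb hD hx in
lemma Qset_nonempty (n : ℕ) : (Qset W D x n).Nonempty := by
  have hfin : (Set.Finite {y | ∃ k, k ≤ n ∧ pathSeq W D x k = y}) := by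
    have : {y | ∃ k, k ≤ n ∧ pathSeq W D x k = y} =
        (fun k => pathSeq W D x k) '' {k | k ≤ n} := by
      ext y; simp [eq_comm]
    rw [this]
    exact Set.Finite.image _ (Set.finite_le_nat n)
  have hclosed : IsClosed {y | ∃ k, k ≤ n ∧ pathSeq W D x k = y} := hfin.isClosed
  have hxU : x ∈ {y | ∃ k, k ≤ n ∧ pathSeq W D x k = y}ᶜ := by
    intro ⟨k, _, hk⟩
    exact path_ne hx k hk.symm
  obtain ⟨V, hVW, hxV, hVsub⟩ := hWb.exists_subset_of_mem_open hxU hclosed.isOpen_compl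
  obtain ⟨m, rfl⟩ := hVW
  obtain ⟨p, hp⟩ := hD.exists_mem_open (isOpen_W hWb m) ⟨x, hxV⟩
  refine ⟨p, m, hxV, hp, ?_⟩
  intro k hk hmem
  exact hVsub hmem ⟨k, hk, rfl⟩

lemma Qset_antitone (n : ℕ) : Qset W D x (n + 1) ⊆ Qset W D x n := by
  rintro p ⟨m, h1, h2, h3⟩
  exact ⟨m, h1, h2, fun k hk => h3 k (Nat.le_succ_of_le hk)⟩

include hWb hD hx in
lemma sInf_Qset_lt (n : ℕ) : sInf (Qset W D x n) < sInf (Qset W D x (n + 1)) := by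
  have h1 : sInf (Qset W D x (n + 1)) ∈ Qset W D x n :=
    Qset_antitone n (Nat.sInf_mem (Qset_nonempty hWb hD hx (n + 1)))
  have h2 : sInf (Qset W D x n) ∉ Qset W D x (n + 1) := by
    rintro ⟨m, _, hmem, h3⟩
    exact h3 (n + 1) le_rfl (path_succ hx n ▸ hmem)
  have hle : sInf (Qset W D x n) ≤ sInf (Qset W D x (n + 1)) := Nat.sInf_le h1
  rcases lt_or_eq_of_le hle with h | h
  · exact h
  · exact absurd (h ▸ Nat.sInf_mem (Qset_nonempty hWb hD hx (n + 1))) h2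

include hWb hD hx in
lemma le_sInf_Qset (n : ℕ) : n ≤ sInf (Qset W D x n) :=
  StrictMono.le_apply (strictMono_nat_of_lt_succ (sInf_Qset_lt hWb hD hx))

end Path

section Tendsto

lemma eventually_of_tendsto {f : ℕ → Bool} {b : Bool}
    (h : Tendsto f atTop (𝓝 b)) : ∃ N, ∀ n, N ≤ n → f n = b := by
  rw [nhds_discrete, tendsto_pure] at h
  exact eventually_atTop.mp h

end Tendsto

/-- Case A : some finitely-supported nonzero point is not in the range of `D`. -/
lemma caseA {W : ℕ → Set CC} {D : ℕ → CC}
    (hWb : TopologicalSpace.IsTopologicalBasis (Set.range W)) (hD : DenseRange D)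
    (hrec : ∀ f ∈ Set.range Ifun, RecoverableWith W D f)
    (e : CC) (hFin : Fin0 e) (hbit : ∃ i, e i = true) (hnot : e ∉ Set.range D) : False := by
  set t : ℕ → CC := fun n => pathSeq W D e n with ht
  -- recoverability of (Ifun e) at e
  have h1 : Tendsto (fun n => Ifun e (t n)) atTop (𝓝 (Ifun e e)) :=
    hrec (Ifun e) ⟨e, rfl⟩ e
  rw [Ifun_diag_true hFin] at h1
  obtain ⟨N, hN⟩ := eventually_of_tendsto h1
  -- the true-set of Ifun e is contained in the finite set of pads of e
  set Z := {M | ∀ j, M ≤ j → e j = false} with hZ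
  have hZne : Z.Nonempty := hFin
  set ℓe := sInf Z with hℓe
  have hℓemem : ℓe ∈ Z := Nat.sInf_mem hZne
  have hpadbig : ∀ j, ℓe ≤ j → pad e j = pad e ℓe := by
    intro j hj
    funext i
    by_cases hi : i < ℓe
    · rw [pad_apply_lt hi, pad_apply_lt (lt_of_lt_of_le hi hj)]
    · rw [pad_apply_ge (Nat.le_of_not_lt hi)]
      by_cases hij : i < j
      · rw [pad_apply_lt hij, hℓemem i (Nat.le_of_not_lt hi)]
      · rw [pad_apply_ge (Nat.le_of_not_lt hij)]
  set Pads := pad e '' (Set.Iic ℓe) with hPads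
  have hPadsfin : Pads.Finite := Set.Finite.image _ (Set.finite_Iic ℓe)
  have htrue_sub : ∀ u, Ifun e u = true → u ∈ Pads := by
    intro u hu
    obtain ⟨j, rfl⟩ := Ifun_eq_true_iff.mp hu
    by_cases hj : j ≤ ℓe
    · exact ⟨j, Set.mem_Iic.mpr hj, rfl⟩
    · exact ⟨ℓe, Set.mem_Iic.mpr le_rfl, (hpadbig j (Nat.le_of_not_le hj)).symm⟩
  -- pigeonhole: some pad ≠ e occurs infinitely often in the path
  have hcover : Set.Ici N ⊆ ⋃ y ∈ (Pads \ {e}), {n | t n = y} := by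
    intro n hn
    have h2 : Ifun e (t n) = true := hN n hn
    have h3 : t n ∈ Pads := htrue_sub _ h2
    have h4 : t n ≠ e := fun h => path_ne hnot n h.symm
    exact Set.mem_biUnion ⟨h3, h4⟩ rfl
  have hinf : ∃ y ∈ Pads \ {e}, {n | t n = y}.Infinite := by
    by_contra hc
    push_neg at hc
    have : (⋃ y ∈ (Pads \ {e}), {n | t n = y}).Finite :=
      Set.Finite.biUnion hPadsfin.diff (fun y hy => hc y hy)
    exact Set.Ici_infinite N (this.subset hcover)
  obtain ⟨y, ⟨hyPads, hyne⟩, hyinf⟩ := hinf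
  have hyne' : y ≠ e := hyne
  obtain ⟨j₀, _, hj₀⟩ := hyPads
  -- minimal pad representation of y
  have hrep : ∃ j, y = pad e j := ⟨j₀, hj₀.symm⟩
  set ℓy := sInf {j | y = pad e j} with hℓy
  have hymem : y = pad e ℓy := Nat.sInf_mem hrep
  have hℓylt : ℓy < ℓe := by
    by_contra hge
    have : pad e ℓy = e := by
      apply pad_eq_self
      intro i hi
      exact hℓemem i (le_trans (Nat.le_of_not_lt hge) hi)
    exact hyne' (hymem.trans this)
  -- e is not eventually false from ℓy
  have hℓyne : ¬(∀ j, ℓy ≤ j → e j = false) := by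
    intro h
    exact absurd (Nat.sInf_le (show ℓy ∈ Z from h)) (Nat.not_le.mpr hℓylt)
  push_neg at hℓyne
  obtain ⟨i₁, hi₁le, hi₁⟩ := hℓyne
  have hi₁t : e i₁ = true := by
    cases h : e i₁ with
    | true => rfl
    | false => exact absurd h hi₁
  -- the discriminating function γ
  set γ : CC := fun n => if n < ℓy then e n else if n = ℓy then !(e ℓy) else false with hγ
  have hγy : Ifun γ y = true := by
    rw [Ifun_eq_true_iff]
    refine ⟨ℓy, ?_⟩
    funext i
    by_cases hi : i < ℓy
    · rw [pad_apply_lt hi]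
      have h1 : y i = e i := by rw [hymem, pad_apply_lt hi]
      simp [hγ, hi, h1]
    · rw [pad_apply_ge (Nat.le_of_not_lt hi)]
      rw [hymem, pad_apply_ge (Nat.le_of_not_lt hi)]
  have hγe : Ifun γ e = false := by
    rw [Ifun_eq_false_iff]
    intro j hj
    by_cases hjy : j ≤ ℓy
    · have := congrFun hj i₁
      rw [pad_apply_ge (le_trans hjy hi₁le)] at this
      rw [hi₁t] at this
      exact Bool.noConfusion this
    · have := congrFun hj ℓy
      rw [pad_apply_lt (Nat.lt_of_not_le hjy)] at this
      simp only [hγ, lt_irrefl, if_false, if_neg (lt_irrefl ℓy), if_pos rfl] at this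
      exact absurd this (by simp)
  -- recoverability of (Ifun γ) at e gives the contradiction
  have h5 : Tendsto (fun n => Ifun γ (t n)) atTop (𝓝 (Ifun γ e)) :=
    hrec (Ifun γ) ⟨γ, rfl⟩ e
  rw [hγe] at h5
  obtain ⟨N₂, hN₂⟩ := eventually_of_tendsto h5
  obtain ⟨n, hn, hngt⟩ := hyinf.exists_gt N₂
  have : Ifun γ (t n) = false := hN₂ n (le_of_lt hngt)
  rw [hn, hγy] at this
  exact Bool.noConfusion this


section CaseB

variable {W : ℕ → Set CC} {D : ℕ → CC}

/-- stage data : for a finite prefix `s` (as a list), `eL s` is the associated padded point,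
`qL s` its first index in `D`, `JL s` a depth separating it from all earlier points of `D`. -/
def eL (s : List Bool) : CC := padL s

def qL (D : ℕ → CC) (s : List Bool) : ℕ := sInf {p | D p = eL s}

def dIdx (D : ℕ → CC) (s : List Bool) (p : ℕ) : ℕ := sInf {i | D p i ≠ eL s i}

def JL (D : ℕ → CC) (s : List Bool) : ℕ :=
  ((Finset.range (qL D s)).sup (dIdx D s)) + 1

variable (hWb : TopologicalSpace.IsTopologicalBasis (Set.range W))

include hWb in
/-- a basic set around `eL s` inside the `JL`-cylinder -/
lemma exists_window (s : List Bool) :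
    ∃ m, eL s ∈ W m ∧ W m ⊆ cyl (eL s) (JL D s) := by
  obtain ⟨V, hVW, hxV, hVsub⟩ := hWb.exists_subset_of_mem_open
    (mem_cyl_self (eL s) (JL D s)) (isOpen_cyl _ _)
  obtain ⟨m, rfl⟩ := hVW
  exact ⟨m, hxV, hVsub⟩

def mW (hWb : TopologicalSpace.IsTopologicalBasis (Set.range W)) (D : ℕ → CC)
    (s : List Bool) : ℕ := Classical.choose (exists_window hWb (D := D) s)

lemma mW_mem (s : List Bool) : eL s ∈ W (mW hWb D s) :=
  (Classical.choose_spec (exists_window hWb (D := D) s)).1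

lemma mW_sub (s : List Bool) : W (mW hWb D s) ⊆ cyl (eL s) (JL D s) :=
  (Classical.choose_spec (exists_window hWb (D := D) s)).2

include hWb in
lemma exists_jW (s : List Bool) : ∃ j, cyl (eL s) j ⊆ W (mW hWb D s) :=
  exists_cyl_subset (hWb.isOpen ⟨mW hWb D s, rfl⟩) (mW_mem hWb s)

/-- the inner cylinder radius of the window -/
def jW (hWb : TopologicalSpace.IsTopologicalBasis (Set.range W)) (D : ℕ → CC)
    (s : List Bool) : ℕ :=
  Classical.choose (exists_jW hWb (D := D) s)

lemma jW_sub (s : List Bool) : cyl (eL s) (jW hWb D s) ⊆ W (mW hWb D s) :=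
  Classical.choose_spec (exists_jW hWb (D := D) s)

/-- the next prefix -/
def nextL (hWb : TopologicalSpace.IsTopologicalBasis (Set.range W)) (D : ℕ → CC)
    (s : List Bool) (istage : ℕ) : List Bool :=
  let r₀ := max (jW hWb D s) (s.length + 1) - s.length
  let r := if D istage (s.length + r₀) = true then r₀ + 1 else r₀
  s ++ List.replicate r false ++ [true]

/-- the sequence of prefixes -/
def PL (hWb : TopologicalSpace.IsTopologicalBasis (Set.range W)) (D : ℕ → CC) : ℕ → List Bool
  | 0 => [true]
  | i + 1 => nextL hWb D (PL hWb D i) i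

/-- the diagonal point -/
def xpt (hWb : TopologicalSpace.IsTopologicalBasis (Set.range W)) (D : ℕ → CC) : CC :=
  fun n => (PL hWb D (n + 1)).getD n false

end CaseB

section CaseBfacts

variable {W : ℕ → Set CC} {D : ℕ → CC}
variable (hWb : TopologicalSpace.IsTopologicalBasis (Set.range W))

lemma nextL_spec (s : List Bool) (istage : ℕ) :
    ∃ r, nextL hWb D s istage = s ++ List.replicate r false ++ [true] ∧
      jW hWb D s ≤ s.length + r ∧ 1 ≤ r ∧
      (D istage (s.length + r) = false ∨
        ∃ i, s.length ≤ i ∧ i < s.length + r ∧ D istage i = true) := by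
  set r₀ := max (jW hWb D s) (s.length + 1) - s.length with hr₀
  have hjle : jW hWb D s ≤ s.length + r₀ := by
    have : s.length + r₀ = max (jW hWb D s) (s.length + 1) := by omega
    omega
  have hr₀1 : 1 ≤ r₀ := by omega
  by_cases hc : D istage (s.length + r₀) = true
  · refine ⟨r₀ + 1, ?_, by omega, by omega, Or.inr ⟨s.length + r₀, by omega, by omega, hc⟩⟩
    rw [nextL]
    simp only [← hr₀, hc, if_pos]
  · refine ⟨r₀, ?_, hjle, hr₀1, Or.inl (by simpa using hc)⟩
    rw [nextL]
    simp only [← hr₀, hc, if_neg, Bool.false_eq_true, not_false_iff]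

lemma PL_prefix_succ (i : ℕ) : PL hWb D i <+: PL hWb D (i + 1) := by
  obtain ⟨r, hout, -, -, -⟩ := nextL_spec hWb (PL hWb D i) i
  show PL hWb D i <+: nextL hWb D (PL hWb D i) i
  rw [hout, List.append_assoc]
  exact List.prefix_append _ _

lemma PL_prefix {i j : ℕ} (h : i ≤ j) : PL hWb D i <+: PL hWb D j := by
  induction j with
  | zero => rw [Nat.le_zero.mp h]
  | succ j ih =>
      rcases Nat.lt_or_ge i (j + 1) with h2 | h2
      · exact (ih (Nat.lt_succ_iff.mp h2)).trans (PL_prefix_succ hWb j)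
      · rw [le_antisymm h h2]

lemma PL_length_succ (i : ℕ) : (PL hWb D i).length + 2 ≤ (PL hWb D (i+1)).length := by
  obtain ⟨r, hout, -, hr1, -⟩ := nextL_spec hWb (PL hWb D i) i
  show (PL hWb D i).length + 2 ≤ (nextL hWb D (PL hWb D i) i).length
  rw [hout]
  simp only [List.length_append, List.length_replicate, List.length_cons, List.length_nil]
  omega

lemma PL_length (i : ℕ) : i + 1 ≤ (PL hWb D i).length := by
  induction i with
  | zero => simp [PL]
  | succ i ih => have := PL_length_succ hWb (D := D) i; omega

lemma xpt_eq_get {i n : ℕ} (h : n < (PL hWb D i).length) :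
    xpt hWb D n = (PL hWb D i)[n] := by
  have hlen : n < (PL hWb D (n + 1)).length := by
    have := PL_length hWb (D := D) (n + 1); omega
  have hx : xpt hWb D n = (PL hWb D (n + 1))[n] := by
    rw [xpt, List.getD_eq_getElem _ _ hlen]
  rcases Nat.le_total i (n + 1) with hij | hij
  · rw [hx, (List.IsPrefix.getElem (PL_prefix hWb hij) h).symm]
  · rw [hx, List.IsPrefix.getElem (PL_prefix hWb hij) hlen]

lemma eL_eq_pad (i : ℕ) : eL (PL hWb D i) = pad (xpt hWb D) (PL hWb D i).length := by
  funext n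
  by_cases h : n < (PL hWb D i).length
  · rw [pad_apply_lt h, xpt_eq_get hWb h]
    simp [eL, padL, h]
  · rw [pad_apply_ge (Nat.le_of_not_lt h)]
    simp [eL, padL, h]

lemma PL_last (i : ℕ) :
    ∀ h : (PL hWb D i).length - 1 < (PL hWb D i).length,
      (PL hWb D i)[(PL hWb D i).length - 1] = true := by
  intro h
  cases i with
  | zero => simp [PL]
  | succ i =>
      obtain ⟨r, hout, -, -, -⟩ := nextL_spec hWb (PL hWb D i) i
      have hout' : PL hWb D (i+1) = (PL hWb D i ++ List.replicate r false) ++ [true] := by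
        show nextL hWb D (PL hWb D i) i = _
        rw [hout]
      have hlen : (PL hWb D (i+1)).length - 1 = (PL hWb D i ++ List.replicate r false).length := by
        rw [hout']; simp
      rw [List.getElem_of_eq hout' h]
      exact List.getElem_concat_length hlen _

lemma xpt_not_fin0 : ¬ Fin0 (xpt hWb D) := by
  rintro ⟨N, hN⟩
  have hlen : N + 1 ≤ (PL hWb D N).length := PL_length hWb N
  have hpos : (PL hWb D N).length - 1 < (PL hWb D N).length := by omega
  have h1 : xpt hWb D ((PL hWb D N).length - 1) = true := by
    rw [xpt_eq_get hWb hpos]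
    exact PL_last hWb N hpos
  have h2 : xpt hWb D ((PL hWb D N).length - 1) = false := hN _ (by omega)
  rw [h1] at h2
  exact Bool.noConfusion h2

lemma xpt_zero_zone {i n : ℕ} (h1 : (PL hWb D i).length ≤ n)
    (h2 : n + 1 < (PL hWb D (i+1)).length) : xpt hWb D n = false := by
  obtain ⟨r, hout, -, -, -⟩ := nextL_spec hWb (PL hWb D i) i
  have hout' : PL hWb D (i+1) = (PL hWb D i ++ List.replicate r false) ++ [true] := by
    show nextL hWb D (PL hWb D i) i = _
    rw [hout]
  have hlen : (PL hWb D (i+1)).length = (PL hWb D i).length + r + 1 := by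
    rw [hout']; simp; omega
  have hnlt : n < (PL hWb D (i+1)).length := by omega
  rw [xpt_eq_get hWb hnlt, List.getElem_of_eq hout' hnlt]
  have hmid : n < (PL hWb D i ++ List.replicate r false).length := by
    simp only [List.length_append, List.length_replicate]; omega
  rw [List.getElem_append_left hmid, List.getElem_append_right h1]
  exact List.getElem_replicate _

lemma xpt_at_end (i : ℕ) :
    xpt hWb D ((PL hWb D (i+1)).length - 1) = true := by
  have hlen : 1 ≤ (PL hWb D (i+1)).length := by have := PL_length hWb (D := D) (i+1); omega
  have hpos : (PL hWb D (i+1)).length - 1 < (PL hWb D (i+1)).length := by omega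
  rw [xpt_eq_get hWb hpos]
  exact PL_last hWb (i+1) hpos

lemma xpt_not_range : xpt hWb D ∉ Set.range D := by
  rintro ⟨istage, heq⟩
  obtain ⟨r, hout, -, -, hdiag⟩ := nextL_spec hWb (PL hWb D istage) istage
  have hout' : PL hWb D (istage+1) = PL hWb D istage ++ List.replicate r false ++ [true] := by
    show nextL hWb D (PL hWb D istage) istage = _
    rw [hout]
  have hlen : (PL hWb D (istage+1)).length = (PL hWb D istage).length + r + 1 := by
    rw [hout']; simp; omega
  rcases hdiag with hfalse | ⟨i, hi1, hi2, hitrue⟩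
  · -- x has true at position len + r, D istage has false
    have h1 : xpt hWb D ((PL hWb D istage).length + r) = true := by
      have := xpt_at_end hWb (D := D) istage
      rw [hlen] at this
      simpa using this
    rw [heq] at hfalse
    rw [h1] at hfalse
    exact Bool.noConfusion hfalse
  · -- x has false at position i, D istage has true
    have h1 : xpt hWb D i = false := xpt_zero_zone hWb hi1 (by omega)
    rw [heq] at hitrue
    rw [h1] at hitrue
    exact Bool.noConfusion hitrue

lemma xpt_in_window (i : ℕ) :
    xpt hWb D ∈ cyl (eL (PL hWb D i)) (jW hWb D (PL hWb D i)) := by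
  obtain ⟨r, hout, hjle, -, -⟩ := nextL_spec hWb (PL hWb D i) i
  intro n hn
  by_cases h : n < (PL hWb D i).length
  · rw [xpt_eq_get hWb h]
    simp [eL, padL, h]
  · have h1 : (PL hWb D i).length ≤ n := Nat.le_of_not_lt h
    have hout' : PL hWb D (i+1) = PL hWb D i ++ List.replicate r false ++ [true] := by
      show nextL hWb D (PL hWb D i) i = _
      rw [hout]
    have hlen : (PL hWb D (i+1)).length = (PL hWb D i).length + r + 1 := by
      rw [hout']; simp; omega
    have h2 : xpt hWb D n = false := xpt_zero_zone hWb h1 (by omega)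
    rw [h2]
    show _ = padL (PL hWb D i) n
    simp [padL, h]

end CaseBfacts

section CaseBmain

variable {W : ℕ → Set CC} {D : ℕ → CC}
variable (hWb : TopologicalSpace.IsTopologicalBasis (Set.range W)) (hD : DenseRange D)

include hWb hD in
/-- In case every finitely supported nonzero point is in the range of `D`,
the point `xpt` defeats recoverability. -/
lemma caseB
    (hAll : ∀ e : CC, Fin0 e → (∃ i, e i = true) → e ∈ Set.range D)
    (hrec : ∀ f ∈ Set.range Ifun, RecoverableWith W D f) : False := by
  set x := xpt hWb D with hx
  have hxnot : x ∉ Set.range D := xpt_not_range hWb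
  -- stage facts
  have heFin : ∀ i, Fin0 (eL (PL hWb D i)) := by
    intro i
    exact ⟨(PL hWb D i).length, fun n hn => by simp [eL, padL, Nat.not_lt.mpr hn]⟩
  have hebit : ∀ i, ∃ n, eL (PL hWb D i) n = true := by
    intro i
    have hlen : 1 ≤ (PL hWb D i).length := by have := PL_length hWb (D := D) i; omega
    have hpos : (PL hWb D i).length - 1 < (PL hWb D i).length := by omega
    refine ⟨(PL hWb D i).length - 1, ?_⟩
    have := PL_last hWb (D := D) i hpos
    simp only [eL, padL, dif_pos hpos]
    simpa using this
  have hqmem : ∀ i, D (qL D (PL hWb D i)) = eL (PL hWb D i) := by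
    intro i
    have : eL (PL hWb D i) ∈ Set.range D := hAll _ (heFin i) (hebit i)
    obtain ⟨p, hp⟩ := this
    exact Nat.sInf_mem (⟨p, hp⟩ : {p | D p = eL (PL hWb D i)}.Nonempty)
  have hqmin : ∀ i p, p < qL D (PL hWb D i) → D p ≠ eL (PL hWb D i) := by
    intro i p hp heq
    exact absurd (Nat.sInf_le (show p ∈ {p | D p = eL (PL hWb D i)} from heq))
      (Nat.not_le.mpr hp)
  -- earlier points of D avoid the J-cylinder
  have hDnotin : ∀ i p, p < qL D (PL hWb D i) →
      D p ∉ cyl (eL (PL hWb D i)) (JL D (PL hWb D i)) := by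
    intro i p hp hmem
    have hne : D p ≠ eL (PL hWb D i) := hqmin i p hp
    have hnonempty : {n | D p n ≠ eL (PL hWb D i) n}.Nonempty := by
      by_contra hc
      rw [Set.not_nonempty_iff_eq_empty] at hc
      apply hne
      funext n
      by_contra hcc
      exact absurd (Set.eq_empty_iff_forall_notMem.mp hc n) (fun h => h hcc)
    have hspec : D p (dIdx D (PL hWb D i) p) ≠ eL (PL hWb D i) (dIdx D (PL hWb D i) p) :=
      Nat.sInf_mem hnonempty
    have hlt : dIdx D (PL hWb D i) p < JL D (PL hWb D i) := by
      have : dIdx D (PL hWb D i) p ≤ (Finset.range (qL D (PL hWb D i))).sup (dIdx D (PL hWb D i)) :=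
        Finset.le_sup (Finset.mem_range.mpr hp)
      rw [JL]; omega
    exact hspec (hmem _ hlt)
  -- the hit lemma
  have hit : ∀ i, 1 ≤ qL D (PL hWb D i) →
      ∃ n, pathSeq W D x (n + 1) = eL (PL hWb D i) := by
    intro i hq1
    set q := qL D (PL hWb D i) with hq
    have hex : ∃ n, q ≤ sInf (Qset W D x n) := ⟨q, le_sInf_Qset hWb hD hxnot q⟩
    set N := Nat.find hex with hN
    have hfind : q ≤ sInf (Qset W D x N) := Nat.find_spec hex
    have hmin : ∀ k, k < N → sInf (Qset W D x k) < q := by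
      intro k hk
      exact Nat.lt_of_not_le (Nat.find_min hex hk)
    have hpast : ∀ k, k ≤ N → ∃ p, p < q ∧ pathSeq W D x k = D p := by
      intro k hk
      cases k with
      | zero => exact ⟨0, hq1, by rw [pathSeq]⟩
      | succ k' =>
          refine ⟨sInf (Qset W D x k'), hmin k' (by omega), path_succ hxnot k'⟩
    have hQmem : q ∈ Qset W D x N := by
      refine ⟨mW hWb D (PL hWb D i), ?_, ?_, ?_⟩
      · exact jW_sub hWb _ (xpt_in_window hWb i)
      · rw [show D q = eL (PL hWb D i) from hqmem i]
        exact jW_sub hWb _ (mem_cyl_self _ _)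
      · intro k hk hmem
        obtain ⟨p, hplt, hpeq⟩ := hpast k hk
        rw [hpeq] at hmem
        exact hDnotin i p hplt (mW_sub hWb _ hmem)
    have heq2 : sInf (Qset W D x N) = q := le_antisymm (Nat.sInf_le hQmem) hfind
    refine ⟨N, ?_⟩
    rw [path_succ hxnot N, heq2]
    exact hqmem i
  -- the e's are pairwise distinct
  have hedist : ∀ i j, i < j → eL (PL hWb D i) ≠ eL (PL hWb D j) := by
    intro i j hij heq
    have hlenlt : (PL hWb D i).length < (PL hWb D j).length := by
      have h1 : (PL hWb D (i+1)).length ≤ (PL hWb D j).length :=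
        List.IsPrefix.length_le (PL_prefix hWb hij)
      have := PL_length_succ hWb (D := D) i
      omega
    set p := (PL hWb D j).length - 1 with hp
    have hppos : p < (PL hWb D j).length := by
      have := PL_length hWb (D := D) j; omega
    have h1 : eL (PL hWb D j) p = true := by
      simp only [eL, padL, dif_pos hppos]
      have := PL_last hWb (D := D) j hppos
      simpa using this
    have h2 : eL (PL hWb D i) p = false := by
      have : ¬ p < (PL hWb D i).length := by omega
      simp [eL, padL, this]
    rw [heq, h1] at h2
    exact Bool.noConfusion h2
  -- q is injective on stages, so all but at most one stage has q ≥ 1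
  have hqinj : ∀ i j, qL D (PL hWb D i) = qL D (PL hWb D j) → i = j := by
    intro i j heq
    by_contra hne
    rcases Nat.lt_or_ge i j with h | h
    · exact hedist i j h (by rw [← hqmem i, ← hqmem j, heq])
    · have h2 : j < i := by omega
      exact hedist j i h2 (by rw [← hqmem i, ← hqmem j, heq])
  have hI : {i | 1 ≤ qL D (PL hWb D i)}.Infinite := by
    have hcompl : {i | 1 ≤ qL D (PL hWb D i)}ᶜ.Subsingleton := by
      intro i hi j hj
      simp only [Set.mem_compl_iff, Set.mem_setOf_eq, Nat.not_le, Nat.lt_one_iff] at hi hj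
      exact hqinj i j (hi.trans hj.symm)
    have : {i | 1 ≤ qL D (PL hWb D i)}ᶜ.Finite := hcompl.finite
    have h2 := this.infinite_compl
    rwa [compl_compl] at h2
  -- choose hit times
  choose nhit hnhit using hit
  -- recoverability of Ifun x at x
  have hxx : Ifun x x = false := Ifun_of_not_fin0 (xpt_not_fin0 hWb)
  have h5 : Tendsto (fun n => Ifun x (pathSeq W D x n)) atTop (𝓝 (Ifun x x)) :=
    hrec (Ifun x) ⟨x, rfl⟩ x
  rw [hxx] at h5
  obtain ⟨N₀, hN₀⟩ := eventually_of_tendsto h5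
  -- extract a hit beyond N₀
  have hgex : ∃ g : ℕ → ℕ, ∀ i (h : 1 ≤ qL D (PL hWb D i)), g i = nhit i h + 1 := by
    refine ⟨fun i => if h : 1 ≤ qL D (PL hWb D i) then nhit i h + 1 else 0, ?_⟩
    intro i h
    exact dif_pos h
  obtain ⟨g, hgeq⟩ := hgex
  have hginj : Set.InjOn g {i | 1 ≤ qL D (PL hWb D i)} := by
    intro i hi j hj hgij
    rw [hgeq i hi, hgeq j hj] at hgij
    by_contra hne
    have hpathi := hnhit i hi
    have hpathj := hnhit j hj
    have : eL (PL hWb D i) = eL (PL hWb D j) := by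
      rw [← hpathi, ← hpathj]
      rw [show nhit i hi = nhit j hj by omega]
    rcases Nat.lt_or_ge i j with h | h
    · exact hedist i j h this
    · exact hedist j i (by omega) this.symm
  have himg : (g '' {i | 1 ≤ qL D (PL hWb D i)}).Infinite := hI.image hginj
  obtain ⟨v, ⟨i, hiI, rfl⟩, hgt⟩ := himg.exists_gt N₀
  have hiI' : 1 ≤ qL D (PL hWb D i) := hiI
  have hv1 : g i = nhit i hiI' + 1 := hgeq i hiI'
  have hfalse : Ifun x (pathSeq W D x (g i)) = false := hN₀ _ (le_of_lt hgt)
  rw [hv1, hnhit i hiI'] at hfalse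
  have htrue : Ifun x (eL (PL hWb D i)) = true :=
    Ifun_eq_true_iff.mpr ⟨(PL hWb D i).length, eL_eq_pad hWb i⟩
  rw [htrue] at hfalse
  exact Bool.noConfusion hfalse

end CaseBmain

end NUR

/-- There is a continuous injection `I : 2^ω → B₁(2^ω, 2)` (pointwise convergence topology
on the target) whose range is not uniformly recoverable; in fact the evaluation map on
`2^ω × I[2^ω]` is not Baire class one. -/
theorem exists_continuous_injection_not_uniformlyRecoverable :
    ∃ I : (ℕ → Bool) → ((ℕ → Bool) → Bool),
      Continuous I ∧ Function.Injective I ∧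
      (∀ α : ℕ → Bool, BaireClassOneFn (I α)) ∧
      ¬ (∃ W : ℕ → Set (ℕ → Bool), IsGoodBasis W ∧
          ∃ D : ℕ → (ℕ → Bool), DenseRange D ∧ ∀ f ∈ Set.range I, RecoverableWith W D f) ∧
      ¬ BaireClassOneFn
          (fun p : (ℕ → Bool) × ↥(Set.range I) => (p.2 : (ℕ → Bool) → Bool) p.1) := by
  refine ⟨NUR.Ifun, NUR.continuous_Ifun, NUR.injective_Ifun, NUR.baireOne_Ifun, ?_, ?_⟩
  · rintro ⟨W, hW, D, hD, hrec⟩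
    by_cases hA : ∃ e : NUR.CC, NUR.Fin0 e ∧ (∃ i, e i = true) ∧ e ∉ Set.range D
    · obtain ⟨e, hFin, hbit, hnot⟩ := hA
      exact NUR.caseA hW.1 hD hrec e hFin hbit hnot
    · push_neg at hA
      exact NUR.caseB hW.1 hD (fun e h1 h2 => hA e h1 h2) hrec
  · exact NUR.eval_not_baireOne
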